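/- arXiv:1812.11814 — 2 statements merged into one kernel-verified Lean document; each statement's English description precedes it below -/
import Mathlib

section
/- Let ρ, ε, M be positive real numbers and let φ be a holomorphic function on the polydisc D = {(x, v) ∈ ℂ² : |x| < ρ, |v| < ε} with |φ(x, v)| ≤ M on D, φ(0, 0) = 0 and (∂φ/∂v)(0, 0) = 0. Then there exists a unique holomorphic function v defined on the disc {x ∈ ℂ : |x| < ρ·(ε/(ε + 2M))²} such that v(0) = 0, |v(x)| < ε for all x in this disc, and v(x) = φ(x, v(x)) for all x in this disc. -/
open Metric Filter Complex Set
open scoped NNReal ENNReal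

set_option maxHeartbeats 1000000

noncomputable section

/-- Power series representation on an open ball with Cauchy coefficient bounds. -/
lemma exists_rep {f : ℂ → ℂ} {ε M : ℝ} (hε : 0 < ε) (hM : 0 ≤ M)
    (hf : DifferentiableOn ℂ f (Metric.ball 0 ε))
    (hb : ∀ v ∈ Metric.ball (0:ℂ) ε, ‖f v‖ ≤ M) :
    ∃ a : ℕ → ℂ,
      (∀ y : ℂ, ‖y‖ < ε → HasSum (fun j => a j * y ^ j) (f y)) ∧
      (∀ j, ‖a j‖ ≤ M / ε ^ j) ∧ a 0 = f 0 ∧ a 1 = deriv f 0 := by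
  -- the family of cauchy power series, all equal
  have hball : ∀ R : ℝ≥0, 0 < (R:ℝ) → (R:ℝ) < ε →
      HasFPowerSeriesOnBall f (cauchyPowerSeries f 0 R) 0 R := by
    intro R hR0 hRε
    exact (hf.mono (Metric.closedBall_subset_ball hRε)).hasFPowerSeriesOnBall
      (by exact_mod_cast hR0)
  set R₀ : ℝ≥0 := ⟨ε/2, by positivity⟩ with hR₀
  have hR₀0 : 0 < (R₀:ℝ) := by show (0:ℝ) < ε/2; positivity
  have hR₀ε : (R₀:ℝ) < ε := by show ε/2 < ε; linarith
  set p := cauchyPowerSeries f 0 ((R₀ : ℝ)) with hp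
  have hp₀ : HasFPowerSeriesOnBall f p 0 R₀ := hball R₀ hR₀0 hR₀ε
  have hpeq : ∀ R : ℝ≥0, 0 < (R:ℝ) → (R:ℝ) < ε → cauchyPowerSeries f 0 R = p := by
    intro R h0 h1
    exact (hball R h0 h1).hasFPowerSeriesAt.eq_formalMultilinearSeries
      hp₀.hasFPowerSeriesAt
  refine ⟨fun j => p.coeff j, ?_, ?_, ?_, ?_⟩
  · intro y hy
    set R : ℝ≥0 := ⟨(‖y‖ + ε)/2, by positivity⟩ with hR
    have hR0 : 0 < (R:ℝ) := by show (0:ℝ) < (‖y‖ + ε)/2; positivity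
    have hRε : (R:ℝ) < ε := by
      simp only [hR, NNReal.coe_mk]
      change (‖y‖ + ε)/2 < ε
      linarith
    have hyR : ‖y‖ < (R:ℝ) := by
      simp only [hR, NNReal.coe_mk]
      change ‖y‖ < (‖y‖ + ε)/2
      linarith [norm_nonneg y]
    have hmem : y ∈ Metric.eball (0:ℂ) (R : ℝ≥0∞) := by
      rw [Metric.mem_eball, edist_zero_right]
      exact_mod_cast (by exact_mod_cast hyR : ‖y‖₊ < R)
    have := (hball R hR0 hRε).hasSum hmem
    rw [zero_add] at this
    rw [hpeq R hR0 hRε] at this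
    have e : (fun j => p.coeff j * y ^ j) = fun n => p n fun _ => y := by
      funext j
      rw [FormalMultilinearSeries.apply_eq_pow_smul_coeff, smul_eq_mul, mul_comm]
    show HasSum (fun j => p.coeff j * y ^ j) (f y)
    rw [e]; exact this
  · intro j
    have key : ∀ R : ℝ, 0 < R → R < ε → ‖p.coeff j‖ ≤ M / R ^ j := by
      intro R hR0 hRε
      set R' : ℝ≥0 := ⟨R, hR0.le⟩ with hR'
      have hcoe : (R' : ℝ) = R := rfl
      have h1 : ‖p.coeff j‖ = ‖cauchyPowerSeries f 0 R j‖ := by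
        rw [← FormalMultilinearSeries.norm_apply_eq_norm_coef]
        rw [show (cauchyPowerSeries f 0 R) = p by
          rw [show (R:ℝ) = ((R' : ℝ≥0) : ℝ) from rfl]; exact hpeq R' hR0 hRε]
      rw [h1]
      refine le_trans (norm_cauchyPowerSeries_le f 0 R j) ?_
      have hint : (∫ θ : ℝ in (0)..2 * Real.pi, ‖f (circleMap 0 R θ)‖) ≤ 2 * Real.pi * M := by
        have hc : Continuous fun θ : ℝ => ‖f (circleMap 0 R θ)‖ := by
          refine ((hf.continuousOn.comp_continuous (continuous_circleMap 0 R) ?_)).norm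
          intro θ
          rw [mem_ball_zero_iff]
          have := norm_circleMap_zero R θ
          rw [this,
            abs_of_pos hR0]
          exact hRε
        calc (∫ θ : ℝ in (0)..2 * Real.pi, ‖f (circleMap 0 R θ)‖)
            ≤ ∫ _ : ℝ in (0)..2 * Real.pi, M := by
              refine intervalIntegral.integral_mono_on Real.two_pi_pos.le
                (hc.intervalIntegrable _ _) (intervalIntegrable_const) ?_
              intro θ _
              refine hb _ ?_
              rw [mem_ball_zero_iff,
                norm_circleMap_zero R θ, abs_of_pos hR0]
              exact hRε
          _ = 2 * Real.pi * M := by simp [mul_comm]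
      have h2 : (2 * Real.pi)⁻¹ * (∫ θ : ℝ in (0)..2 * Real.pi, ‖f (circleMap 0 R θ)‖) ≤ M := by
        rw [inv_mul_le_iff₀ Real.two_pi_pos]
        linarith [hint]
      have h3 : (|R|⁻¹ : ℝ) ^ j = (R ^ j)⁻¹ := by
        rw [abs_of_pos hR0, inv_pow]
      calc ((2 * Real.pi)⁻¹ * ∫ θ : ℝ in (0)..2 * Real.pi, ‖f (circleMap 0 R θ)‖) * |R|⁻¹ ^ j
          ≤ M * (R ^ j)⁻¹ := by
            rw [h3]
            exact mul_le_mul_of_nonneg_right h2 (by positivity)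
        _ = M / R ^ j := by rw [div_eq_mul_inv]
    -- take the limit R → ε from the left
    have htd : Tendsto (fun R : ℝ => M / R ^ j) (nhdsWithin ε (Set.Iio ε)) (nhds (M / ε ^ j)) :=
      (Filter.Tendsto.div tendsto_const_nhds ((continuous_pow j).continuousAt)
        (pow_ne_zero j hε.ne')).mono_left nhdsWithin_le_nhds
    refine ge_of_tendsto htd ?_
    filter_upwards [Ioo_mem_nhdsLT_of_mem (show ε ∈ Set.Ioc (ε/2) ε by
      constructor <;> linarith)] with R hR
    exact key R (by linarith [hR.1]) hR.2
  · exact hp₀.coeff_zero _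
  · have := hp₀.hasFPowerSeriesAt.deriv
    rw [this]
    rfl

/-- compare a complex `HasSum` against a real dominating `HasSum`. -/
lemma norm_hasSum_le {g : ℕ → ℂ} {S : ℂ} {d : ℕ → ℝ} {D : ℝ}
    (h : HasSum g S) (hd : HasSum d D) (hle : ∀ j, ‖g j‖ ≤ d j) : ‖S‖ ≤ D := by
  have hsn : Summable fun j => ‖g j‖ :=
    Summable.of_nonneg_of_le (fun j => norm_nonneg _) hle hd.summable
  calc ‖S‖ = ‖∑' j, g j‖ := by rw [h.tsum_eq]
    _ ≤ ∑' j, ‖g j‖ := norm_tsum_le_tsum_norm hsn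
    _ ≤ ∑' j, d j := hsn.tsum_le_tsum hle hd.summable
    _ = D := hd.tsum_eq

/-- Tail bound: `‖f y - a 0 - a 1 * y‖ ≤ M (‖y‖/ε)² (1-‖y‖/ε)⁻¹`. -/
lemma tail_bound {f : ℂ → ℂ} {ε M : ℝ} {a : ℕ → ℂ} (hε : 0 < ε) (hM : 0 ≤ M)
    (ha : ∀ j, ‖a j‖ ≤ M / ε ^ j) {y : ℂ} (hy : ‖y‖ < ε)
    (hsum : HasSum (fun j => a j * y ^ j) (f y)) :
    ‖f y - a 0 - a 1 * y‖ ≤ M * (‖y‖ / ε) ^ 2 * (1 - ‖y‖ / ε)⁻¹ := by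
  set c : ℝ := ‖y‖ / ε with hc
  have hc0 : 0 ≤ c := by positivity
  have hc1 : c < 1 := by rw [hc, div_lt_one hε]; exact hy
  have hshift : HasSum (fun j => a (j + 2) * y ^ (j + 2))
      (f y - ∑ i ∈ Finset.range 2, a i * y ^ i) :=
    (hasSum_nat_add_iff' 2).2 hsum
  have hsumeq : (∑ i ∈ Finset.range 2, a i * y ^ i) = a 0 + a 1 * y := by
    simp [Finset.sum_range_succ]
  rw [hsumeq] at hshift
  have hdom : HasSum (fun j : ℕ => (M * c ^ 2) * c ^ j) ((M * c ^ 2) * (1 - c)⁻¹) :=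
    (hasSum_geometric_of_lt_one hc0 hc1).mul_left _
  have hle : ∀ j : ℕ, ‖a (j + 2) * y ^ (j + 2)‖ ≤ (M * c ^ 2) * c ^ j := by
    intro j
    rw [norm_mul, norm_pow]
    calc ‖a (j + 2)‖ * ‖y‖ ^ (j + 2)
        ≤ (M / ε ^ (j + 2)) * ‖y‖ ^ (j + 2) :=
          mul_le_mul_of_nonneg_right (ha _) (by positivity)
      _ = (M * c ^ 2) * c ^ j := by
          rw [hc, div_pow, div_pow]
          field_simp
          ring
  have := norm_hasSum_le hshift hdom hle
  rw [sub_sub]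
  exact this

lemma pow_sub_pow_le (u w : ℂ) {t : ℝ} (hu : ‖u‖ ≤ t) (hw : ‖w‖ ≤ t) (n : ℕ) :
    ‖u ^ (n + 1) - w ^ (n + 1)‖ ≤ (n + 1 : ℝ) * t ^ n * ‖u - w‖ := by
  have ht : 0 ≤ t := le_trans (norm_nonneg u) hu
  rw [← geom_sum₂_mul u w (n + 1), norm_mul]
  refine mul_le_mul_of_nonneg_right ?_ (norm_nonneg _)
  calc ‖∑ i ∈ Finset.range (n + 1), u ^ i * w ^ (n + 1 - 1 - i)‖
      ≤ ∑ i ∈ Finset.range (n + 1), ‖u ^ i * w ^ (n + 1 - 1 - i)‖ := norm_sum_le _ _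
    _ ≤ ∑ _i ∈ Finset.range (n + 1), t ^ n := by
        refine Finset.sum_le_sum fun i hi => ?_
        rw [Finset.mem_range] at hi
        rw [norm_mul, norm_pow, norm_pow]
        calc ‖u‖ ^ i * ‖w‖ ^ (n + 1 - 1 - i)
            ≤ t ^ i * t ^ (n + 1 - 1 - i) :=
              mul_le_mul (pow_le_pow_left₀ (norm_nonneg _) hu i)
                (pow_le_pow_left₀ (norm_nonneg _) hw _) (by positivity) (by positivity)
          _ = t ^ n := by rw [← pow_add]; congr 1; omega
    _ = (n + 1 : ℝ) * t ^ n := by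
        rw [Finset.sum_const, Finset.card_range, nsmul_eq_mul]; push_cast; ring

lemma lip_bound {f : ℂ → ℂ} {ε M t : ℝ} {a : ℕ → ℂ} (hε : 0 < ε) (hM : 0 ≤ M)
    (ht0 : 0 ≤ t) (htε : t < ε) (ha : ∀ j, ‖a j‖ ≤ M / ε ^ j)
    {u w : ℂ} (hu : ‖u‖ ≤ t) (hw : ‖w‖ ≤ t)
    (hsu : HasSum (fun j => a j * u ^ j) (f u)) (hsw : HasSum (fun j => a j * w ^ j) (f w)) :
    ‖f u - f w‖ ≤ (‖a 1‖ + M / ε * ((1 - t / ε)⁻¹ ^ 2 - 1)) * ‖u - w‖ := by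
  set q : ℝ := t / ε with hq
  have hq0 : 0 ≤ q := by positivity
  have hq1 : q < 1 := by rw [hq, div_lt_one hε]; exact htε
  have hq1' : (0:ℝ) < 1 - q := by linarith
  -- the difference series
  have hdiff : HasSum (fun j => a j * u ^ j - a j * w ^ j) (f u - f w) := hsu.sub hsw
  have hshift : HasSum (fun j => a (j + 2) * u ^ (j + 2) - a (j + 2) * w ^ (j + 2))
      (f u - f w - ∑ i ∈ Finset.range 2, (a i * u ^ i - a i * w ^ i)) :=
    (hasSum_nat_add_iff' 2).2 hdiff
  have hsum2 : (∑ i ∈ Finset.range 2, (a i * u ^ i - a i * w ^ i)) = a 1 * (u - w) := by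
    simp [Finset.sum_range_succ]
    ring
  rw [hsum2] at hshift
  -- dominating series ∑ (j+2) q^(j+1) = (1-q)⁻² - 1
  have hF : HasSum (fun n : ℕ => ((n : ℝ) + 1) * q ^ n) ((1 - q)⁻¹ ^ 2) := by
    have h1 : HasSum (fun n : ℕ => (n : ℝ) * q ^ n) (q / (1 - q) ^ 2) :=
      hasSum_coe_mul_geometric_of_norm_lt_one (by rwa [Real.norm_eq_abs, _root_.abs_of_nonneg hq0])
    have h2 : HasSum (fun n : ℕ => q ^ n) ((1 - q)⁻¹) := hasSum_geometric_of_lt_one hq0 hq1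
    have h3 := h1.add h2
    have he : (fun n : ℕ => (n : ℝ) * q ^ n + q ^ n) = fun n : ℕ => ((n : ℝ) + 1) * q ^ n := by
      funext n; ring
    rw [he] at h3
    convert h3 using 1
    rw [inv_pow]
    field_simp
    ring
  have hFs : HasSum (fun j : ℕ => ((j : ℝ) + 2) * q ^ (j + 1)) ((1 - q)⁻¹ ^ 2 - 1) := by
    have h4 := (hasSum_nat_add_iff' (f := fun n : ℕ => ((n : ℝ) + 1) * q ^ n) 1).2 hF
    have h5 : (∑ i ∈ Finset.range 1, ((i : ℝ) + 1) * q ^ i) = 1 := by simp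
    rw [h5] at h4
    have e : (fun j : ℕ => ((j : ℝ) + 2) * q ^ (j + 1)) =
        fun n : ℕ => (((n + 1 : ℕ) : ℝ) + 1) * q ^ (n + 1) := by
      funext j
      push_cast
      ring
    rw [e]; exact h4
  have hdom : HasSum (fun j : ℕ => (M / ε * ‖u - w‖) * (((j : ℝ) + 2) * q ^ (j + 1)))
      ((M / ε * ‖u - w‖) * ((1 - q)⁻¹ ^ 2 - 1)) := hFs.mul_left _
  have hle : ∀ j : ℕ, ‖a (j + 2) * u ^ (j + 2) - a (j + 2) * w ^ (j + 2)‖ ≤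
      (M / ε * ‖u - w‖) * (((j : ℝ) + 2) * q ^ (j + 1)) := by
    intro j
    rw [← mul_sub, norm_mul]
    have h5 : ‖u ^ (j + 2) - w ^ (j + 2)‖ ≤ ((j : ℝ) + 2) * t ^ (j + 1) * ‖u - w‖ := by
      have := pow_sub_pow_le u w hu hw (j + 1)
      push_cast at this ⊢
      convert this using 3 <;> ring
    calc ‖a (j + 2)‖ * ‖u ^ (j + 2) - w ^ (j + 2)‖
        ≤ (M / ε ^ (j + 2)) * (((j : ℝ) + 2) * t ^ (j + 1) * ‖u - w‖) := by
          refine mul_le_mul (ha _) h5 (norm_nonneg _) (by positivity)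
      _ = (M / ε * ‖u - w‖) * (((j : ℝ) + 2) * q ^ (j + 1)) := by
          rw [hq, div_pow]
          field_simp
          ring
  have hS' := norm_hasSum_le hshift hdom hle
  have htri : ‖f u - f w‖ ≤ ‖a 1 * (u - w)‖ + ‖f u - f w - a 1 * (u - w)‖ := by
    calc ‖f u - f w‖ = ‖a 1 * (u - w) + (f u - f w - a 1 * (u - w))‖ := by ring_nf
      _ ≤ _ := norm_add_le _ _
  calc ‖f u - f w‖ ≤ ‖a 1 * (u - w)‖ + ‖f u - f w - a 1 * (u - w)‖ := htri
    _ ≤ ‖a 1‖ * ‖u - w‖ + (M / ε * ‖u - w‖) * ((1 - q)⁻¹ ^ 2 - 1) := by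
        rw [norm_mul]
        exact add_le_add le_rfl hS'
    _ = (‖a 1‖ + M / ε * ((1 - q)⁻¹ ^ 2 - 1)) * ‖u - w‖ := by ring

lemma numeric_facts {ε M t s₀ K : ℝ} (hε : 0 < ε) (hM : 0 < M)
    (ht : t = ε ^ 2 / (2 * (ε + M))) (hs : s₀ = ε ^ 2 / (4 * M * (ε + M)))
    (hK : K = M / ε * s₀ + M / ε * ((1 - t / ε)⁻¹ ^ 2 - 1)) :
    (0 < t ∧ t < ε) ∧ (0 ≤ K ∧ K < 1) ∧
      M * s₀ + M / ε * s₀ * t + M * (t / ε) ^ 2 * (1 - t / ε)⁻¹ ≤ t := by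
  have hεM : (0:ℝ) < ε + M := by linarith
  have hε2M : (0:ℝ) < ε + 2 * M := by linarith
  have ht0 : 0 < t := by rw [ht]; positivity
  have htq : t / ε = ε / (2 * (ε + M)) := by
    rw [ht]; field_simp
  have h1q : 1 - t / ε = (ε + 2 * M) / (2 * (ε + M)) := by
    rw [htq]; field_simp; ring
  have htε : t < ε := by
    have h : t / ε < 1 := by rw [htq, div_lt_one (by positivity)]; nlinarith
    calc t = t / ε * ε := by field_simp
      _ < 1 * ε := mul_lt_mul_of_pos_right h hε
      _ = ε := one_mul ε
  have hKeq : K + ε ^ 2 * (3 * ε + 4 * M) / (4 * (ε + M) * (ε + 2 * M) ^ 2) = 1 := by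
    rw [hK, hs, h1q, inv_div]
    field_simp
    ring
  have hK1 : K < 1 := by
    nlinarith [(by positivity : (0:ℝ) < ε ^ 2 * (3 * ε + 4 * M) / (4 * (ε + M) * (ε + 2 * M) ^ 2))]
  have hK0 : 0 ≤ K := by
    have h2 : (1:ℝ) ≤ (1 - t / ε)⁻¹ := by
      rw [h1q, inv_div, le_div_iff₀ hε2M]
      nlinarith
    have h3 : (1:ℝ) ≤ (1 - t / ε)⁻¹ ^ 2 := by nlinarith
    have h4 : (0:ℝ) ≤ M / ε * ((1 - t / ε)⁻¹ ^ 2 - 1) :=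
      mul_nonneg (by positivity) (by linarith)
    have h5 : (0:ℝ) ≤ M / ε * s₀ := by rw [hs]; positivity
    rw [hK]; linarith
  have hSM : M * s₀ + M / ε * s₀ * t + M * (t / ε) ^ 2 * (1 - t / ε)⁻¹ +
      ε ^ 4 / (8 * (ε + M) ^ 2 * (ε + 2 * M)) = t := by
    rw [hs, h1q, htq, inv_div, ht]
    field_simp
    ring
  refine ⟨⟨ht0, htε⟩, ⟨hK0, hK1⟩, ?_⟩
  nlinarith [(by positivity : (0:ℝ) < ε ^ 4 / (8 * (ε + M) ^ 2 * (ε + 2 * M)))]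

/-- Schwarz-type bound: if `f` is holomorphic on `ball 0 ρ`, bounded by `C`, `f 0 = 0`,
then `‖f x‖ ≤ C ‖x‖ / (ρ - ‖x‖)`. -/
lemma schwarz_bound {f : ℂ → ℂ} {ρ C : ℝ} (hρ : 0 < ρ) (hC : 0 ≤ C)
    (hf : DifferentiableOn ℂ f (Metric.ball 0 ρ))
    (hb : ∀ x ∈ Metric.ball (0:ℂ) ρ, ‖f x‖ ≤ C) (h0 : f 0 = 0)
    {x : ℂ} (hx : ‖x‖ < ρ) : ‖f x‖ ≤ C * ‖x‖ / (ρ - ‖x‖) := by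
  obtain ⟨a, hsum, hab, ha0, -⟩ := exists_rep hρ hC hf hb
  set c : ℝ := ‖x‖ / ρ with hc
  have hc0 : 0 ≤ c := by positivity
  have hc1 : c < 1 := by rw [hc, div_lt_one hρ]; exact hx
  have hshift : HasSum (fun j => a (j + 1) * x ^ (j + 1))
      (f x - ∑ i ∈ Finset.range 1, a i * x ^ i) :=
    (hasSum_nat_add_iff' 1).2 (hsum x hx)
  have hsum1 : (∑ i ∈ Finset.range 1, a i * x ^ i) = 0 := by
    simp [ha0, h0]
  rw [hsum1, sub_zero] at hshift
  have hdom : HasSum (fun j : ℕ => (C * c) * c ^ j) ((C * c) * (1 - c)⁻¹) :=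
    (hasSum_geometric_of_lt_one hc0 hc1).mul_left _
  have hle : ∀ j : ℕ, ‖a (j + 1) * x ^ (j + 1)‖ ≤ (C * c) * c ^ j := by
    intro j
    rw [norm_mul, norm_pow]
    calc ‖a (j + 1)‖ * ‖x‖ ^ (j + 1)
        ≤ (C / ρ ^ (j + 1)) * ‖x‖ ^ (j + 1) :=
          mul_le_mul_of_nonneg_right (hab _) (by positivity)
      _ = (C * c) * c ^ j := by
          rw [hc, div_pow]
          field_simp
          ring
  have h1 := norm_hasSum_le hshift hdom hle
  have heq : (C * c) * (1 - c)⁻¹ = C * ‖x‖ / (ρ - ‖x‖) := by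
    have hρx : (0:ℝ) < ρ - ‖x‖ := by linarith
    rw [hc, show (1:ℝ) - ‖x‖ / ρ = (ρ - ‖x‖) / ρ by field_simp, inv_div]
    rw [eq_div_iff hρx.ne']
    have hZ : (-‖x‖ + ρ) ≠ 0 := by
      have h2 : (0:ℝ) < -‖x‖ + ρ := by
        linarith
      exact h2.ne'
    field_simp
  rwa [heq] at h1

lemma radius_facts {ρ ε M r s₀ : ℝ} (hρ : 0 < ρ) (hε : 0 < ε) (hM : 0 < M)
    (hr : r = ρ * (ε / (ε + 2 * M)) ^ 2) (hs : s₀ = ε ^ 2 / (4 * M * (ε + M))) :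
    0 < r ∧ r < ρ ∧ ∀ X : ℝ, 0 ≤ X → X < r → X / (ρ - X) ≤ s₀ := by
  have hε2M : (0:ℝ) < ε + 2 * M := by linarith
  have hr0 : 0 < r := by rw [hr]; positivity
  have hδ : ε / (ε + 2 * M) < 1 := by rw [div_lt_one hε2M]; linarith
  have hδ0 : 0 < ε / (ε + 2 * M) := by positivity
  have hrρ : r < ρ := by
    rw [hr]
    calc ρ * (ε / (ε + 2 * M)) ^ 2 < ρ * 1 := by
          apply mul_lt_mul_of_pos_left _ hρ
          nlinarith
      _ = ρ := mul_one ρ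
  have hkey : r * (1 + s₀) = s₀ * ρ := by
    rw [hr, hs]
    field_simp
    ring
  refine ⟨hr0, hrρ, fun X hX0 hXr => ?_⟩
  have hXρ : X < ρ := lt_trans hXr hrρ
  have hρX : 0 < ρ - X := by linarith
  rw [div_le_iff₀ hρX]
  have hs₀ : 0 < s₀ := by rw [hs]; positivity
  nlinarith [mul_nonneg (sub_nonneg.mpr hXr.le) (by positivity : (0:ℝ) ≤ 1 + s₀)]

/-- Picard iteration for the fixed point equation `v = φ(x, v)`. -/
def picard (φ : ℂ × ℂ → ℂ) : ℕ → ℂ → ℂ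
  | 0 => fun _ => 0
  | n + 1 => fun x => φ (x, picard φ n x)

/-- Quantitative implicit function theorem: if `φ` is holomorphic on the polydisc
`{|x| < ρ, |v| < ε}`, bounded by `M` there, with `φ(0,0) = 0` and `∂φ/∂v(0,0) = 0`,
then on the disc `{|x| < ρ (ε/(ε+2M))²}` there is a unique holomorphic function `v`
with `v(0) = 0`, `|v| < ε`, solving `v(x) = φ(x, v(x))`. -/
theorem quantitative_implicit_function_theorem
    (ρ ε M : ℝ) (hρ : 0 < ρ) (hε : 0 < ε) (hM : 0 < M)
    (φ : ℂ × ℂ → ℂ)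
    (hφ : DifferentiableOn ℂ φ {p : ℂ × ℂ | ‖p.1‖ < ρ ∧ ‖p.2‖ < ε})
    (hbound : ∀ p : ℂ × ℂ, ‖p.1‖ < ρ → ‖p.2‖ < ε → ‖φ p‖ ≤ M)
    (h00 : φ (0, 0) = 0)
    (hdv : deriv (fun v : ℂ => φ (0, v)) 0 = 0) :
    ∃ v : ℂ → ℂ,
      (DifferentiableOn ℂ v {x : ℂ | ‖x‖ < ρ * (ε / (ε + 2 * M)) ^ 2} ∧
        v 0 = 0 ∧
        ∀ x : ℂ, ‖x‖ < ρ * (ε / (ε + 2 * M)) ^ 2 →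
          ‖v x‖ < ε ∧ v x = φ (x, v x)) ∧
      ∀ w : ℂ → ℂ,
        (DifferentiableOn ℂ w {x : ℂ | ‖x‖ < ρ * (ε / (ε + 2 * M)) ^ 2} ∧
          w 0 = 0 ∧
          ∀ x : ℂ, ‖x‖ < ρ * (ε / (ε + 2 * M)) ^ 2 →
            ‖w x‖ < ε ∧ w x = φ (x, w x)) →
        ∀ x : ℂ, ‖x‖ < ρ * (ε / (ε + 2 * M)) ^ 2 → w x = v x := by
  have hεM : (0:ℝ) < ε + M := by linarith
  have hε2M : (0:ℝ) < ε + 2 * M := by linarith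
  obtain ⟨⟨ht0, htε⟩, ⟨hK0, hK1⟩, hSM0⟩ :=
    numeric_facts (t := ε ^ 2 / (2 * (ε + M))) (s₀ := ε ^ 2 / (4 * M * (ε + M))) hε hM rfl rfl rfl
  set t := ε ^ 2 / (2 * (ε + M)) with htdef
  set s₀ := ε ^ 2 / (4 * M * (ε + M)) with hsdef
  set K := M / ε * s₀ + M / ε * ((1 - t / ε)⁻¹ ^ 2 - 1) with hKdef
  obtain ⟨hr0, hrρ, hmono⟩ :=
    radius_facts (r := ρ * (ε / (ε + 2 * M)) ^ 2) (s₀ := s₀) hρ hε hM rfl hsdef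
  set r := ρ * (ε / (ε + 2 * M)) ^ 2 with hrdef
  -- the open domain
  have hDopen : IsOpen {p : ℂ × ℂ | ‖p.1‖ < ρ ∧ ‖p.2‖ < ε} := by
    have heq : {p : ℂ × ℂ | ‖p.1‖ < ρ ∧ ‖p.2‖ < ε} =
        (Prod.fst ⁻¹' Metric.ball (0:ℂ) ρ) ∩ (Prod.snd ⁻¹' Metric.ball (0:ℂ) ε) := by
      ext p
      simp [Metric.mem_ball, dist_zero_right]
    rw [heq]
    exact (isOpen_ball.preimage continuous_fst).inter (isOpen_ball.preimage continuous_snd)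
  -- slices
  have hfx : ∀ x : ℂ, ‖x‖ < ρ → DifferentiableOn ℂ (fun v => φ (x, v)) (Metric.ball 0 ε) := by
    intro x hx
    have h1 : DifferentiableOn ℂ (fun v : ℂ => ((x, v) : ℂ × ℂ)) (Metric.ball 0 ε) :=
      (differentiableOn_const _).prodMk differentiableOn_id
    exact hφ.comp h1 fun v hv => ⟨hx, by simpa [mem_ball_zero_iff] using hv⟩
  have hfxb : ∀ x : ℂ, ‖x‖ < ρ → ∀ v ∈ Metric.ball (0:ℂ) ε, ‖φ (x, v)‖ ≤ M :=
    fun x hx v hv => hbound (x, v) hx (mem_ball_zero_iff.1 hv)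
  have hrep : ∀ x : ℂ, ‖x‖ < ρ → ∃ a : ℕ → ℂ,
      (∀ y : ℂ, ‖y‖ < ε → HasSum (fun j => a j * y ^ j) (φ (x, y))) ∧
      (∀ j, ‖a j‖ ≤ M / ε ^ j) ∧ a 0 = φ (x, 0) ∧
      a 1 = deriv (fun v => φ (x, v)) 0 :=
    fun x hx => exists_rep hε hM.le (hfx x hx) (hfxb x hx)
  -- the function g = ∂φ/∂v (·, 0)
  set g : ℂ → ℂ := fun x => deriv (fun v => φ (x, v)) 0 with hgdef
  have hg0 : g 0 = 0 := hdv
  have hgb : ∀ x : ℂ, ‖x‖ < ρ → ‖g x‖ ≤ M / ε := by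
    intro x hx
    obtain ⟨a, -, hab, -, ha1⟩ := hrep x hx
    have h2 : g x = a 1 := by rw [hgdef]; exact ha1.symm
    rw [h2]
    simpa using hab 1
  -- g is holomorphic (uniform limit of difference quotients)
  have hgd : DifferentiableOn ℂ g (Metric.ball 0 ρ) := by
    set y : ℕ → ℂ := fun n => ((ε / (2 * (n + 1)) : ℝ) : ℂ) with hydef
    have hyn : ∀ n : ℕ, ‖y n‖ = ε / (2 * (n + 1)) := by
      intro n
      rw [hydef]
      rw [Complex.norm_real, Real.norm_eq_abs, abs_of_pos (by positivity)]
    have hyε2 : ∀ n : ℕ, ‖y n‖ ≤ ε / 2 := by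
      intro n
      rw [hyn n]
      rw [div_le_div_iff₀ (by positivity) (by positivity)]
      nlinarith [Nat.cast_nonneg (α := ℝ) n]
    have hyε : ∀ n : ℕ, ‖y n‖ < ε := fun n => lt_of_le_of_lt (hyε2 n) (by linarith)
    have hy0 : ∀ n : ℕ, (0:ℝ) < ‖y n‖ := by
      intro n; rw [hyn n]; positivity
    have hyne : ∀ n : ℕ, y n ≠ 0 := fun n => norm_ne_zero_iff.1 (hy0 n).ne'
    set G : ℕ → ℂ → ℂ := fun n x => (φ (x, y n) - φ (x, 0)) / y n with hGdef
    have hGdiff : ∀ n, DifferentiableOn ℂ (G n) (Metric.ball 0 ρ) := by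
      intro n
      apply DifferentiableOn.div_const
      apply DifferentiableOn.sub
      · exact hφ.comp (differentiableOn_id.prodMk (differentiableOn_const _))
          fun x hx => ⟨mem_ball_zero_iff.1 hx, by simpa using hyε n⟩
      · exact hφ.comp (differentiableOn_id.prodMk (differentiableOn_const _))
          fun x hx => ⟨mem_ball_zero_iff.1 hx, by simpa using hε⟩
    have hconv : TendstoUniformlyOn G g atTop (Metric.ball 0 ρ) := by
      rw [Metric.tendstoUniformlyOn_iff]
      intro η hη
      obtain ⟨N, hN⟩ := exists_nat_gt (M / (ε * η))
      refine Filter.eventually_atTop.2 ⟨N, fun n hn x hx => ?_⟩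
      have hx' : ‖x‖ < ρ := mem_ball_zero_iff.1 hx
      obtain ⟨a, hsum, hab, ha0, ha1⟩ := hrep x hx'
      have htail := tail_bound (f := fun v => φ (x, v)) hε hM.le hab (hyε n) (hsum (y n) (hyε n))
      have heq2 : G n x - g x = (φ (x, y n) - a 0 - a 1 * y n) / y n := by
        simp only [hGdef, hgdef]
        rw [ha0, ha1]
        field_simp [hyne n]
      have hb1 : ‖G n x - g x‖ ≤ M * (‖y n‖ / ε) ^ 2 * (1 - ‖y n‖ / ε)⁻¹ / ‖y n‖ := by
        rw [heq2, norm_div]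
        exact div_le_div_of_nonneg_right htail (hy0 n).le
      have hb2 : M * (‖y n‖ / ε) ^ 2 * (1 - ‖y n‖ / ε)⁻¹ / ‖y n‖ ≤ 2 * M * ‖y n‖ / ε ^ 2 := by
        have hq2 : ‖y n‖ / ε ≤ 1 / 2 := by
          rw [div_le_div_iff₀ hε (by norm_num)]
          linarith [hyε2 n]
        have hinv : (1 - ‖y n‖ / ε)⁻¹ ≤ 2 := by
          have h3 : (1:ℝ) / 2 ≤ 1 - ‖y n‖ / ε := by linarith
          calc (1 - ‖y n‖ / ε)⁻¹ ≤ ((1:ℝ)/2)⁻¹ :=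
                inv_anti₀ (by norm_num) h3
            _ = 2 := by norm_num
        rw [div_le_div_iff₀ (hy0 n) (by positivity)]
        have hyn0 : 0 ≤ ‖y n‖ := (hy0 n).le
        have e3' : (‖y n‖ / ε) ^ 2 * ε ^ 2 = ‖y n‖ ^ 2 := by
          rw [div_pow]; field_simp
        have e3 : M * (‖y n‖ / ε) ^ 2 * (1 - ‖y n‖ / ε)⁻¹ * ε ^ 2 =
            (M * ‖y n‖ ^ 2) * (1 - ‖y n‖ / ε)⁻¹ := by
          calc M * (‖y n‖ / ε) ^ 2 * (1 - ‖y n‖ / ε)⁻¹ * ε ^ 2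
              = M * ((‖y n‖ / ε) ^ 2 * ε ^ 2) * (1 - ‖y n‖ / ε)⁻¹ := by ring
            _ = (M * ‖y n‖ ^ 2) * (1 - ‖y n‖ / ε)⁻¹ := by rw [e3']
        rw [e3]
        calc (M * ‖y n‖ ^ 2) * (1 - ‖y n‖ / ε)⁻¹ ≤ (M * ‖y n‖ ^ 2) * 2 :=
              mul_le_mul_of_nonneg_left hinv (by positivity)
          _ = 2 * M * ‖y n‖ * ‖y n‖ := by ring
      have hb3 : 2 * M * ‖y n‖ / ε ^ 2 = M / (ε * (n + 1)) := by
        rw [hyn n]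
        field_simp
      have hb4 : M / (ε * (n + 1)) < η := by
        rw [div_lt_iff₀ (by positivity)]
        have h5 : M / (ε * η) < (n:ℝ) + 1 := by
          calc M / (ε * η) < (N:ℝ) := hN
            _ ≤ (n:ℝ) := by exact_mod_cast hn
            _ < (n:ℝ) + 1 := by linarith
        rw [div_lt_iff₀ (by positivity)] at h5
        nlinarith
      rw [dist_eq_norm, norm_sub_rev]
      calc ‖G n x - g x‖ ≤ M * (‖y n‖ / ε) ^ 2 * (1 - ‖y n‖ / ε)⁻¹ / ‖y n‖ := hb1
        _ ≤ 2 * M * ‖y n‖ / ε ^ 2 := hb2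
        _ = M / (ε * (n + 1)) := hb3
        _ < η := hb4
    exact hconv.tendstoLocallyUniformlyOn.differentiableOn
      (Filter.Eventually.of_forall hGdiff) Metric.isOpen_ball
  -- Schwarz bounds for φ(·,0) and g
  have hc0d : DifferentiableOn ℂ (fun x => φ (x, 0)) (Metric.ball 0 ρ) :=
    hφ.comp (differentiableOn_id.prodMk (differentiableOn_const _))
      fun x hx => ⟨mem_ball_zero_iff.1 hx, by simpa using hε⟩
  have hc0bd : ∀ x ∈ Metric.ball (0:ℂ) ρ, ‖φ (x, 0)‖ ≤ M :=
    fun x hx => hbound _ (mem_ball_zero_iff.1 hx) (by simpa using hε)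
  have hSchw0 : ∀ x : ℂ, ‖x‖ < ρ → ‖φ (x, 0)‖ ≤ M * ‖x‖ / (ρ - ‖x‖) :=
    fun x hx => schwarz_bound hρ hM.le hc0d hc0bd h00 hx
  have hSchwg : ∀ x : ℂ, ‖x‖ < ρ → ‖g x‖ ≤ M / ε * ‖x‖ / (ρ - ‖x‖) :=
    fun x hx => schwarz_bound hρ (by positivity) hgd
      (fun z hz => hgb z (mem_ball_zero_iff.1 hz)) hg0 hx
  have hXs : ∀ x : ℂ, ‖x‖ < r → ‖x‖ / (ρ - ‖x‖) ≤ s₀ :=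
    fun x hx => hmono ‖x‖ (norm_nonneg x) hx
  have ha1bd : ∀ x : ℂ, ‖x‖ < r → ‖deriv (fun v => φ (x, v)) 0‖ ≤ M / ε * s₀ := by
    intro x hx
    have hxρ : ‖x‖ < ρ := hx.trans hrρ
    have hgx := hSchwg x hxρ
    rw [hgdef] at hgx
    simp only at hgx
    calc ‖deriv (fun v => φ (x, v)) 0‖ ≤ M / ε * ‖x‖ / (ρ - ‖x‖) := hgx
      _ = M / ε * (‖x‖ / (ρ - ‖x‖)) := by rw [mul_div_assoc]
      _ ≤ M / ε * s₀ := mul_le_mul_of_nonneg_left (hXs x hx) (by positivity)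
  -- self-map estimate
  have hSelf : ∀ x : ℂ, ‖x‖ < r → ∀ v : ℂ, ‖v‖ ≤ t → ‖φ (x, v)‖ ≤ t := by
    intro x hx v hv
    have hxρ : ‖x‖ < ρ := hx.trans hrρ
    obtain ⟨a, hsum, hab, ha0, ha1⟩ := hrep x hxρ
    have hvε : ‖v‖ < ε := lt_of_le_of_lt hv htε
    have htail := tail_bound (f := fun v => φ (x, v)) hε hM.le hab hvε (hsum v hvε)
    have htri : ‖φ (x, v)‖ ≤ ‖a 0‖ + ‖a 1‖ * ‖v‖ + ‖φ (x, v) - a 0 - a 1 * v‖ := by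
      have he : φ (x, v) = a 0 + a 1 * v + (φ (x, v) - a 0 - a 1 * v) := by ring
      calc ‖φ (x, v)‖ = ‖a 0 + a 1 * v + (φ (x, v) - a 0 - a 1 * v)‖ := by rw [← he]
        _ ≤ ‖a 0 + a 1 * v‖ + ‖φ (x, v) - a 0 - a 1 * v‖ := norm_add_le _ _
        _ ≤ ‖a 0‖ + ‖a 1‖ * ‖v‖ + ‖φ (x, v) - a 0 - a 1 * v‖ := by
            have h4 := norm_add_le (a 0) (a 1 * v)
            rw [norm_mul] at h4
            linarith
    have hb0 : ‖a 0‖ ≤ M * s₀ := by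
      rw [ha0]
      calc ‖φ (x, 0)‖ ≤ M * ‖x‖ / (ρ - ‖x‖) := hSchw0 x hxρ
        _ = M * (‖x‖ / (ρ - ‖x‖)) := by rw [mul_div_assoc]
        _ ≤ M * s₀ := mul_le_mul_of_nonneg_left (hXs x hx) hM.le
    have hb1 : ‖a 1‖ ≤ M / ε * s₀ := by rw [ha1]; exact ha1bd x hx
    have hq1 : t / ε < 1 := by rw [div_lt_one hε]; exact htε
    have hv1 : ‖v‖ / ε < 1 := by rw [div_lt_one hε]; exact hvε
    have hbtail : ‖φ (x, v) - a 0 - a 1 * v‖ ≤ M * (t / ε) ^ 2 * (1 - t / ε)⁻¹ := by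
      refine le_trans htail ?_
      have h1 : ‖v‖ / ε ≤ t / ε := div_le_div_of_nonneg_right hv hε.le
      have h2 : (1 - ‖v‖ / ε)⁻¹ ≤ (1 - t / ε)⁻¹ :=
        inv_anti₀ (by linarith) (by linarith)
      have h3 : (‖v‖ / ε) ^ 2 ≤ (t / ε) ^ 2 := pow_le_pow_left₀ (by positivity) h1 2
      have h4 : (0:ℝ) ≤ (1 - ‖v‖ / ε)⁻¹ := le_of_lt (inv_pos.2 (by linarith))
      calc M * (‖v‖ / ε) ^ 2 * (1 - ‖v‖ / ε)⁻¹
          ≤ M * (t / ε) ^ 2 * (1 - ‖v‖ / ε)⁻¹ :=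
            mul_le_mul_of_nonneg_right (mul_le_mul_of_nonneg_left h3 hM.le) h4
        _ ≤ M * (t / ε) ^ 2 * (1 - t / ε)⁻¹ :=
            mul_le_mul_of_nonneg_left h2 (by positivity)
    calc ‖φ (x, v)‖ ≤ ‖a 0‖ + ‖a 1‖ * ‖v‖ + ‖φ (x, v) - a 0 - a 1 * v‖ := htri
      _ ≤ M * s₀ + M / ε * s₀ * t + M * (t / ε) ^ 2 * (1 - t / ε)⁻¹ := by
          have h5 : ‖a 1‖ * ‖v‖ ≤ M / ε * s₀ * t :=
            mul_le_mul hb1 hv (norm_nonneg v) (by positivity)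
          linarith
      _ ≤ t := hSM0
  -- Lipschitz estimate
  have hLip : ∀ x : ℂ, ‖x‖ < r → ∀ b c : ℂ, ‖b‖ ≤ t → ‖c‖ ≤ t →
      ‖φ (x, b) - φ (x, c)‖ ≤ K * ‖b - c‖ := by
    intro x hx b c hb hc
    have hxρ : ‖x‖ < ρ := hx.trans hrρ
    obtain ⟨a, hsum, hab, ha0, ha1⟩ := hrep x hxρ
    have h := lip_bound (f := fun v => φ (x, v)) hε hM.le ht0.le htε hab hb hc
      (hsum b (lt_of_le_of_lt hb htε)) (hsum c (lt_of_le_of_lt hc htε))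
    refine le_trans h (mul_le_mul_of_nonneg_right ?_ (norm_nonneg _))
    rw [hKdef]
    apply add_le_add_left
    rw [ha1]
    exact ha1bd x hx
  -- Picard iteration
  have hub : ∀ n, ∀ x : ℂ, ‖x‖ < r → ‖picard φ n x‖ ≤ t := by
    intro n
    induction n with
    | zero => intro x hx; show ‖(0:ℂ)‖ ≤ t; simpa using ht0.le
    | succ n ih =>
      intro x hx
      show ‖φ (x, picard φ n x)‖ ≤ t
      exact hSelf x hx _ (ih x hx)
  have hudiff : ∀ n, DifferentiableOn ℂ (picard φ n) (Metric.ball 0 r) := by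
    intro n
    induction n with
    | zero => exact differentiableOn_const 0
    | succ n ih =>
      show DifferentiableOn ℂ (fun x => φ (x, picard φ n x)) (Metric.ball 0 r)
      refine hφ.comp (differentiableOn_id.prodMk ih) fun x hx => ?_
      have hx' : ‖x‖ < r := mem_ball_zero_iff.1 hx
      exact ⟨hx'.trans hrρ, lt_of_le_of_lt (hub n x hx') htε⟩
  have hcauchy : ∀ x : ℂ, ‖x‖ < r → ∀ n, dist (picard φ n x) (picard φ (n + 1) x) ≤ t * K ^ n := by
    intro x hx n
    induction n with
    | zero =>
      rw [dist_eq_norm]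
      show ‖(0:ℂ) - φ (x, 0)‖ ≤ t * K ^ 0
      rw [zero_sub, norm_neg, pow_zero, mul_one]
      exact hSelf x hx 0 (by simpa using ht0.le)
    | succ n ih =>
      rw [dist_eq_norm]
      calc ‖picard φ (n + 1) x - picard φ (n + 2) x‖
          = ‖φ (x, picard φ n x) - φ (x, picard φ (n + 1) x)‖ := rfl
        _ ≤ K * ‖picard φ n x - picard φ (n + 1) x‖ :=
            hLip x hx _ _ (hub n x hx) (hub (n + 1) x hx)
        _ ≤ K * (t * K ^ n) := by
            refine mul_le_mul_of_nonneg_left ?_ hK0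
            rw [← dist_eq_norm]
            exact ih
        _ = t * K ^ (n + 1) := by ring
  set vfun : ℂ → ℂ := fun x => limUnder atTop (fun n => picard φ n x) with hvdef
  have htend : ∀ x : ℂ, ‖x‖ < r → Tendsto (fun n => picard φ n x) atTop (nhds (vfun x)) := by
    intro x hx
    exact (cauchySeq_of_le_geometric K t hK1 (hcauchy x hx)).tendsto_limUnder
  have hvb : ∀ x : ℂ, ‖x‖ < r → ‖vfun x‖ ≤ t := fun x hx =>
    le_of_tendsto (htend x hx).norm (Filter.Eventually.of_forall fun n => hub n x hx)
  have hvfix : ∀ x : ℂ, ‖x‖ < r → vfun x = φ (x, vfun x) := by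
    intro x hx
    have h1 : Tendsto (fun n => picard φ (n + 1) x) atTop (nhds (vfun x)) :=
      (htend x hx).comp (tendsto_add_atTop_nat 1)
    have hcont : ContinuousAt φ (x, vfun x) := by
      have hmem : (x, vfun x) ∈ {p : ℂ × ℂ | ‖p.1‖ < ρ ∧ ‖p.2‖ < ε} :=
        ⟨hx.trans hrρ, lt_of_le_of_lt (hvb x hx) htε⟩
      exact (hφ.differentiableAt (hDopen.mem_nhds hmem)).continuousAt
    have h2 : Tendsto (fun n => φ (x, picard φ n x)) atTop (nhds (φ (x, vfun x))) :=
      hcont.tendsto.comp (tendsto_const_nhds.prodMk_nhds (htend x hx))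
    have hfun : (fun n => picard φ (n + 1) x) = fun n => φ (x, picard φ n x) := by
      funext n; rfl
    rw [hfun] at h1
    exact tendsto_nhds_unique h1 h2
  have h0r : ‖(0:ℂ)‖ < r := by simpa using hr0
  have hv0 : vfun 0 = 0 := by
    have hz : ∀ n, picard φ n 0 = 0 := by
      intro n
      induction n with
      | zero => rfl
      | succ n ih => show φ (0, picard φ n 0) = 0; rw [ih]; exact h00
    have h1 : Tendsto (fun n => picard φ n 0) atTop (nhds (0:ℂ)) := by
      simp only [hz]; exact tendsto_const_nhds
    exact tendsto_nhds_unique (htend 0 h0r) h1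
  have hvdiff : DifferentiableOn ℂ vfun (Metric.ball 0 r) := by
    have hUC : TendstoUniformlyOn (fun n => picard φ n) vfun atTop (Metric.ball 0 r) := by
      rw [Metric.tendstoUniformlyOn_iff]
      intro η hη
      have hgeo : Tendsto (fun n : ℕ => t * K ^ n / (1 - K)) atTop (nhds 0) := by
        have h1 : Tendsto (fun n : ℕ => K ^ n) atTop (nhds 0) :=
          tendsto_pow_atTop_nhds_zero_of_lt_one hK0 hK1
        have h2 := (h1.const_mul t).div_const (1 - K)
        simpa using h2
      filter_upwards [hgeo.eventually (gt_mem_nhds hη)] with n hn x hx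
      have hx' : ‖x‖ < r := mem_ball_zero_iff.1 hx
      have hd := dist_le_of_le_geometric_of_tendsto K t hK1 (hcauchy x hx') (htend x hx') n
      rw [dist_comm]
      exact lt_of_le_of_lt hd hn
    exact hUC.tendstoLocallyUniformlyOn.differentiableOn
      (Filter.Eventually.of_forall hudiff) Metric.isOpen_ball
  -- uniqueness of small fixed points
  have huniq : ∀ x : ℂ, ‖x‖ < r → ∀ b c : ℂ, ‖b‖ ≤ t → ‖c‖ ≤ t →
      b = φ (x, b) → c = φ (x, c) → b = c := by
    intro x hx b c hb hc hbf hcf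
    have h1 : ‖b - c‖ ≤ K * ‖b - c‖ := by
      calc ‖b - c‖ = ‖φ (x, b) - φ (x, c)‖ := by rw [← hbf, ← hcf]
        _ ≤ K * ‖b - c‖ := hLip x hx b c hb hc
    rcases eq_or_lt_of_le (norm_nonneg (b - c)) with h|h
    · exact sub_eq_zero.1 (norm_eq_zero.1 h.symm)
    · exfalso
      have h2 := mul_lt_mul_of_pos_right hK1 h
      rw [one_mul] at h2
      linarith
  have hsetball : {x : ℂ | ‖x‖ < r} = Metric.ball (0:ℂ) r := by
    ext z; simp [Metric.mem_ball, dist_zero_right]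
  refine ⟨vfun, ⟨?_, hv0, ?_⟩, ?_⟩
  · rw [hsetball]; exact hvdiff
  · exact fun x hx => ⟨lt_of_le_of_lt (hvb x hx) htε, hvfix x hx⟩
  · rintro w ⟨hwdiff, hw0, hwsol⟩ x hx
    have hwd : DifferentiableOn ℂ w (Metric.ball 0 r) := by rwa [hsetball] at hwdiff
    have hwa : AnalyticOnNhd ℂ w (Metric.ball 0 r) := hwd.analyticOnNhd Metric.isOpen_ball
    have hva : AnalyticOnNhd ℂ vfun (Metric.ball 0 r) := hvdiff.analyticOnNhd Metric.isOpen_ball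
    have h0mem : (0:ℂ) ∈ Metric.ball (0:ℂ) r := Metric.mem_ball_self hr0
    have hwc : ContinuousAt w 0 :=
      (hwd.differentiableAt (Metric.isOpen_ball.mem_nhds h0mem)).continuousAt
    have hev : ∀ᶠ z in nhds (0:ℂ), w z = vfun z := by
      have h1 : ∀ᶠ z in nhds (0:ℂ), w z ∈ Metric.ball (0:ℂ) t := by
        apply hwc.eventually_mem
        rw [hw0]
        exact Metric.ball_mem_nhds _ ht0
      have h2 : ∀ᶠ z in nhds (0:ℂ), z ∈ Metric.ball (0:ℂ) r := Metric.ball_mem_nhds _ hr0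
      filter_upwards [h1, h2] with z hz1 hz2
      have hz' : ‖z‖ < r := mem_ball_zero_iff.1 hz2
      exact huniq z hz' (w z) (vfun z) (le_of_lt (mem_ball_zero_iff.1 hz1)) (hvb z hz')
        (hwsol z hz').2 (hvfix z hz')
    exact hwa.eqOn_of_preconnected_of_eventuallyEq hva
      (convex_ball (0:ℂ) r).isPreconnected h0mem hev (mem_ball_zero_iff.2 hx)
end
end

section
/- Let σ > 0 be a real number, r a natural number, ĥ(t) = Σ_{s≥0} h_s t^s a formal power series in t with nonnegative real coefficients h_s ≥ 0, and M̃(t, x, v) = Σ_{(s,p,q)∈ℤ₊³} β_{spq} t^s x^p v^q a formal power series in three variables with nonnegative real coefficients β_{spq} ≥ 0. Then there exists a unique sequence (C_k)_{k≥1} of formal Laurent series in t over ℝ such that the formal power series V = Σ_{k≥1} C_k(t) x^k (an element of the ring of formal power series in x with formal Laurent series in t as coefficients) satisfies σ t^r V = t^{r+1} ĥ(t)·V + x·M̃(t, x, V), where M̃(t, x, V) denotes the substitution of V for v (well defined since V has no constant term in x). Moreover, for every k ≥ 1 the Laurent series C_k has order ≥ −kr (i.e. C_k(t) = t^{−ν_k}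 Σ_{ℓ≥0} C_{kℓ} t^ℓ with ν_k ≤ kr) and all of its coefficients C_{kℓ} are nonnegative. -/
/-- The sequence `(C_k)` of formal Laurent series (with `C 0 = 0`, so that
`V = ∑_{k ≥ 1} C_k x^k`) solves the majorant algebraic equation
`σ t^r V = t^{r+1} ĥ(t) V + x M̃(t, x, V)`, expressed coefficientwise in `x`:
here `ĥ(t) = ∑_s h_s t^s`, `M̃(t,x,v) = ∑_{s,p,q} β_{spq} t^s x^p v^q`, and since
`V` has zero constant term in `x`, the coefficient of `x^k` in `x M̃(t,x,V)` is the
finite sum over `p, q < k` of `(∑_s β_{spq} t^s) · [x^{k-1-p}](V^q)`. -/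
def SolvesMajorantEquation (σ : ℝ) (r : ℕ) (h : ℕ → ℝ) (β : ℕ → ℕ → ℕ → ℝ)
    (C : ℕ → LaurentSeries ℝ) : Prop :=
  C 0 = 0 ∧
    ∀ k : ℕ,
      σ • ((HahnSeries.single (1 : ℤ) (1 : ℝ)) ^ r * C k) =
        (HahnSeries.single (1 : ℤ) (1 : ℝ)) ^ (r + 1) *
            HahnSeries.ofPowerSeries ℤ ℝ (PowerSeries.mk h) * C k +
          (if k = 0 then 0 else
            ∑ p ∈ Finset.range k, ∑ q ∈ Finset.range k,
              HahnSeries.ofPowerSeries ℤ ℝ (PowerSeries.mk fun s => β s p q) *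
                PowerSeries.coeff (R := LaurentSeries ℝ) (k - 1 - p) ((PowerSeries.mk C) ^ q))

open HahnSeries PowerSeries Finset

namespace MajorantAux

/-- Nonnegative coefficients, vanishing below `n`. -/
def NN (n : ℤ) (f : LaurentSeries ℝ) : Prop :=
  (∀ ℓ : ℤ, 0 ≤ f.coeff ℓ) ∧ (∀ ℓ : ℤ, ℓ < n → f.coeff ℓ = 0)

lemma NN.zero (n : ℤ) : NN n (0 : LaurentSeries ℝ) :=
  ⟨fun _ => le_refl 0, fun _ _ => rfl⟩

lemma NN.mono {m n : ℤ} (hmn : m ≤ n) {f : LaurentSeries ℝ} (hf : NN n f) : NN m f :=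
  ⟨hf.1, fun ℓ hℓ => hf.2 ℓ (lt_of_lt_of_le hℓ hmn)⟩

lemma NN.add {n : ℤ} {f g : LaurentSeries ℝ} (hf : NN n f) (hg : NN n g) : NN n (f + g) := by
  refine ⟨fun ℓ => ?_, fun ℓ hℓ => ?_⟩
  · rw [HahnSeries.coeff_add]; exact add_nonneg (hf.1 ℓ) (hg.1 ℓ)
  · rw [HahnSeries.coeff_add, hf.2 ℓ hℓ, hg.2 ℓ hℓ, add_zero]

lemma NN.mul {a b : ℤ} {f g : LaurentSeries ℝ} (hf : NN a f) (hg : NN b g) :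
    NN (a + b) (f * g) := by
  refine ⟨fun ℓ => ?_, fun ℓ hℓ => ?_⟩
  · rw [HahnSeries.coeff_mul]
    exact Finset.sum_nonneg fun ij _ => mul_nonneg (hf.1 _) (hg.1 _)
  · rw [HahnSeries.coeff_mul]
    apply Finset.sum_eq_zero
    intro ij hij
    rw [Finset.mem_addAntidiagonal] at hij
    exfalso
    have h1 : a ≤ ij.1 := by
      by_contra hc; exact hij.1 (hf.2 ij.1 (by omega))
    have h2 : b ≤ ij.2 := by
      by_contra hc; exact hij.2.1 (hg.2 ij.2 (by omega))
    have := hij.2.2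
    omega

lemma NN.sum {n : ℤ} {ι : Type*} {s : Finset ι} {f : ι → LaurentSeries ℝ}
    (hf : ∀ i ∈ s, NN n (f i)) : NN n (∑ i ∈ s, f i) := by
  classical
  induction s using Finset.induction_on with
  | empty => simpa using NN.zero n
  | insert _ _ hx ih =>
    rw [Finset.sum_insert hx]
    exact NN.add (hf _ (Finset.mem_insert_self _ _))
      (ih fun i hi => hf i (Finset.mem_insert_of_mem hi))

lemma NN.single {n : ℤ} {c : ℝ} (hc : 0 ≤ c) : NN n (HahnSeries.single n c) := by
  refine ⟨fun ℓ => ?_, fun ℓ hℓ => ?_⟩ <;> rw [HahnSeries.coeff_single]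
  · split <;> simp [hc]
  · split
    · omega
    · rfl

lemma NN.one : NN 0 (1 : LaurentSeries ℝ) := by
  refine ⟨fun ℓ => ?_, fun ℓ hℓ => ?_⟩ <;> rw [HahnSeries.coeff_one]
  · split <;> norm_num
  · split
    · omega
    · rfl

lemma NN.ofPS {φ : PowerSeries ℝ} (hφ : ∀ s : ℕ, 0 ≤ PowerSeries.coeff (R := ℝ) s φ) :
    NN 0 (HahnSeries.ofPowerSeries ℤ ℝ φ) := by
  have hcoeff : ∀ ℓ : ℤ, (HahnSeries.ofPowerSeries ℤ ℝ φ).coeff ℓ =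
      if 0 ≤ ℓ then PowerSeries.coeff (R := ℝ) ℓ.toNat φ else 0 := by
    intro ℓ
    by_cases hℓ : 0 ≤ ℓ
    · rw [if_pos hℓ]
      have : ℓ = ((ℓ.toNat : ℕ) : ℤ) := by omega
      rw [this, HahnSeries.ofPowerSeries_apply_coeff]
      congr 1
    · rw [if_neg hℓ, HahnSeries.ofPowerSeries_apply]
      apply HahnSeries.embDomain_of_notMem_range
      rintro ⟨m, hm⟩
      simp at hm
      omega
  refine ⟨fun ℓ => ?_, fun ℓ hℓ => ?_⟩ <;> rw [hcoeff]
  · split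
    · exact hφ _
    · rfl
  · rw [if_neg (by omega)]

end MajorantAux

namespace MajorantAux

open MajorantAux

lemma pow_coeff_congr (C C' : ℕ → LaurentSeries ℝ) (n : ℕ) (hcc : ∀ j ≤ n, C j = C' j) :
    ∀ q : ℕ, ∀ m ≤ n, PowerSeries.coeff (R := LaurentSeries ℝ) m ((PowerSeries.mk C) ^ q) =
      PowerSeries.coeff (R := LaurentSeries ℝ) m ((PowerSeries.mk C') ^ q) := by
  intro q
  induction q with
  | zero => intro m _; simp
  | succ q ih =>
    intro m hm
    rw [pow_succ, PowerSeries.coeff_mul, pow_succ, PowerSeries.coeff_mul]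
    apply Finset.sum_congr rfl
    intro ij hij
    rw [Finset.HasAntidiagonal.mem_antidiagonal] at hij
    rw [ih ij.1 (by omega), PowerSeries.coeff_mk, PowerSeries.coeff_mk,
      hcc ij.2 (by omega)]

lemma pow_coeff_NN (C : ℕ → LaurentSeries ℝ) (r : ℕ) (n : ℕ)
    (hC : ∀ j ≤ n, NN (-((j : ℤ) * r)) (C j)) :
    ∀ q : ℕ, ∀ m ≤ n, NN (-((m : ℤ) * r))
      (PowerSeries.coeff (R := LaurentSeries ℝ) m ((PowerSeries.mk C) ^ q)) := by
  intro q
  induction q with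
  | zero =>
    intro m _
    rw [pow_zero, PowerSeries.coeff_one]
    split
    · exact NN.mono (neg_nonpos.mpr (mul_nonneg m.cast_nonneg r.cast_nonneg)) NN.one
    · exact NN.zero _
  | succ q ih =>
    intro m hm
    rw [pow_succ', PowerSeries.coeff_mul]
    apply NN.sum
    intro ij hij
    rw [Finset.HasAntidiagonal.mem_antidiagonal] at hij
    rw [PowerSeries.coeff_mk]
    have h1 := hC ij.1 (by omega)
    have h2 := ih ij.2 (by omega)
    have := NN.mul h1 h2
    have heq : -((ij.1 : ℤ) * r) + -((ij.2 : ℤ) * r) = -((m : ℤ) * r) := by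
      rw [← hij]; push_cast; ring
    rwa [heq] at this

/-- Key inversion lemma: from `σ • (t^r X) = A X + E` with `A` supported in
degrees `≥ r+1` and `E` nonnegative supported in degrees `≥ n`, deduce that `X`
is nonnegative and supported in degrees `≥ n - r`. -/
lemma key {σ : ℝ} (hσ : 0 < σ) (r : ℕ) (A E X : LaurentSeries ℝ)
    (hA : NN ((r : ℤ) + 1) A) (n : ℤ) (hE : NN n E)
    (heq : σ • (HahnSeries.single (r : ℤ) (1 : ℝ) * X) = A * X + E) :
    NN (n - r) X := by
  have hrel : ∀ ℓ : ℤ, X.coeff ℓ = σ⁻¹ * ((A * X).coeff (ℓ + r) + E.coeff (ℓ + r)) := by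
    intro ℓ
    have h0 := congrArg (fun f : LaurentSeries ℝ => f.coeff (ℓ + r)) heq
    simp only [HahnSeries.coeff_smul, HahnSeries.coeff_add, smul_eq_mul] at h0
    rw [HahnSeries.coeff_single_mul_add] at h0
    rw [← h0]
    field_simp
  set Q : ℤ → Prop := fun ℓ => 0 ≤ X.coeff ℓ ∧ (ℓ < n - r → X.coeff ℓ = 0) with hQ
  have step : ∀ ℓ : ℤ, (∀ m : ℤ, m < ℓ → Q m) → Q ℓ := by
    intro ℓ ihm
    have hsupp : ∀ ij ∈ Finset.antidiagonal A.isPWO_support X.isPWO_support (ℓ + r),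
        (r : ℤ) + 1 ≤ ij.1 ∧ ij.2 < ℓ ∧ ij.1 + ij.2 = ℓ + r := by
      intro ij hij
      rw [Finset.mem_addAntidiagonal] at hij
      have h1 : (r : ℤ) + 1 ≤ ij.1 := by
        by_contra hc; exact hij.1 (hA.2 ij.1 (by omega))
      have := hij.2.2
      exact ⟨h1, by omega, this⟩
    constructor
    · rw [hrel ℓ]
      apply mul_nonneg (le_of_lt (inv_pos.mpr hσ))
      apply add_nonneg _ (hE.1 _)
      rw [HahnSeries.coeff_mul]
      apply Finset.sum_nonneg
      intro ij hij
      exact mul_nonneg (hA.1 _) ((ihm ij.2 (hsupp ij hij).2.1).1)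
    · intro hℓ
      rw [hrel ℓ]
      have hEz : E.coeff (ℓ + r) = 0 := hE.2 _ (by omega)
      have hAXz : (A * X).coeff (ℓ + r) = 0 := by
        rw [HahnSeries.coeff_mul]
        apply Finset.sum_eq_zero
        intro ij hij
        have h := hsupp ij hij
        rw [(ihm ij.2 h.2.1).2 (by omega), mul_zero]
      rw [hEz, hAXz, add_zero, mul_zero]
  have hall : ∀ ℓ : ℤ, Q ℓ := by
    by_cases hX : X = 0
    · intro ℓ; subst hX; exact ⟨le_refl 0, fun _ => rfl⟩
    · have hb : ∀ ℓ : ℤ, ℓ < X.order → X.coeff ℓ = 0 := fun ℓ hℓ =>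
        HahnSeries.coeff_eq_zero_of_lt_order hℓ
      have main : ∀ N : ℕ, ∀ ℓ : ℤ, ℓ < X.order + N → Q ℓ := by
        intro N
        induction N with
        | zero =>
          intro ℓ hℓ
          have := hb ℓ (by omega)
          exact ⟨le_of_eq this.symm, fun _ => this⟩
        | succ N ih =>
          intro ℓ hℓ
          exact step ℓ fun m hm => ih m (by omega)
      intro ℓ
      exact main (ℓ - X.order + 1).toNat ℓ (by omega)
  exact ⟨fun ℓ => (hall ℓ).1, fun ℓ hℓ => (hall ℓ).2 hℓ⟩

end MajorantAux

namespace MajorantAux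

lemma tpow (m : ℕ) :
    (HahnSeries.single (1 : ℤ) (1 : ℝ)) ^ m = HahnSeries.single (m : ℤ) (1 : ℝ) := by
  rw [HahnSeries.single_pow, one_pow, nsmul_eq_mul, mul_one]

noncomputable def Hhat (h : ℕ → ℝ) : LaurentSeries ℝ :=
  HahnSeries.ofPowerSeries ℤ ℝ (PowerSeries.mk h)

noncomputable def Bc (β : ℕ → ℕ → ℕ → ℝ) (p q : ℕ) : LaurentSeries ℝ :=
  HahnSeries.ofPowerSeries ℤ ℝ (PowerSeries.mk fun s => β s p q)

noncomputable def D (σ : ℝ) (r : ℕ) (h : ℕ → ℝ) : LaurentSeries ℝ :=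
  σ • HahnSeries.single (r : ℤ) (1 : ℝ) -
    HahnSeries.single ((r : ℤ) + 1) (1 : ℝ) * Hhat h

noncomputable def RHS (β : ℕ → ℕ → ℕ → ℝ) (C : ℕ → LaurentSeries ℝ) (k : ℕ) :
    LaurentSeries ℝ :=
  ∑ p ∈ Finset.range k, ∑ q ∈ Finset.range k,
    Bc β p q * PowerSeries.coeff (R := LaurentSeries ℝ) (k - 1 - p) ((PowerSeries.mk C) ^ q)

lemma NN_Hhat {h : ℕ → ℝ} (hh : ∀ s, 0 ≤ h s) : NN 0 (Hhat h) :=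
  NN.ofPS (by simpa using hh)

lemma D_coeff_r (σ : ℝ) (r : ℕ) {h : ℕ → ℝ} (hh : ∀ s, 0 ≤ h s) :
    (D σ r h).coeff (r : ℤ) = σ := by
  have hnn : NN ((r : ℤ) + 1) (HahnSeries.single ((r : ℤ) + 1) (1 : ℝ) * Hhat h) := by
    have := NN.mul (NN.single (n := (r : ℤ) + 1) (c := (1:ℝ)) zero_le_one) (NN_Hhat hh)
    rwa [add_zero] at this
  rw [D, HahnSeries.coeff_sub, HahnSeries.coeff_smul, hnn.2 _ (by omega),
    HahnSeries.coeff_single, if_pos rfl]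
  simp

lemma D_ne_zero {σ : ℝ} (hσ : 0 < σ) (r : ℕ) {h : ℕ → ℝ} (hh : ∀ s, 0 ≤ h s) :
    D σ r h ≠ 0 := by
  intro h0
  have := D_coeff_r σ r hh
  rw [h0] at this
  simp at this
  exact hσ.ne' this.symm

lemma RHS_congr (β : ℕ → ℕ → ℕ → ℝ) {C C' : ℕ → LaurentSeries ℝ} {k : ℕ}
    (hcc : ∀ j < k, C j = C' j) : RHS β C k = RHS β C' k := by
  unfold RHS
  apply Finset.sum_congr rfl
  intro p hp
  rw [Finset.mem_range] at hp
  apply Finset.sum_congr rfl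
  intro q _
  rw [pow_coeff_congr C C' (k - 1 - p) (fun j hj => hcc j (by omega)) q (k - 1 - p) le_rfl]

noncomputable def Csol (σ : ℝ) (r : ℕ) (h : ℕ → ℝ) (β : ℕ → ℕ → ℕ → ℝ) :
    ℕ → LaurentSeries ℝ
  | 0 => 0
  | (k + 1) =>
    (D σ r h)⁻¹ *
      RHS β (fun j => if _hj : j < k + 1 then Csol σ r h β j else 0) (k + 1)
  termination_by k => k

lemma Csol_zero (σ : ℝ) (r : ℕ) (h : ℕ → ℝ) (β : ℕ → ℕ → ℕ → ℝ) :
    Csol σ r h β 0 = 0 := by rw [Csol]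

lemma Csol_succ (σ : ℝ) (r : ℕ) (h : ℕ → ℝ) (β : ℕ → ℕ → ℕ → ℝ) (k : ℕ) :
    Csol σ r h β (k + 1) = (D σ r h)⁻¹ * RHS β (Csol σ r h β) (k + 1) := by
  rw [Csol]
  congr 1
  apply RHS_congr
  intro j hj
  rw [dif_pos hj]

lemma D_mul_eq (σ : ℝ) (r : ℕ) (h : ℕ → ℝ) (X : LaurentSeries ℝ) :
    σ • ((HahnSeries.single (1 : ℤ) (1 : ℝ)) ^ r * X) -
      (HahnSeries.single (1 : ℤ) (1 : ℝ)) ^ (r + 1) * Hhat h * X = D σ r h * X := by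
  rw [tpow, tpow, D, sub_mul, ← HahnSeries.C_mul_eq_smul, ← HahnSeries.C_mul_eq_smul]
  push_cast
  ring

lemma D_mul_eq' (σ : ℝ) (r : ℕ) (h : ℕ → ℝ) (X : LaurentSeries ℝ) :
    σ • ((HahnSeries.single (1 : ℤ) (1 : ℝ)) ^ r * X) -
      (HahnSeries.single (1 : ℤ) (1 : ℝ)) ^ (r + 1) *
        HahnSeries.ofPowerSeries ℤ ℝ (PowerSeries.mk h) * X = D σ r h * X :=
  D_mul_eq σ r h X

lemma ifsum_eq (β : ℕ → ℕ → ℕ → ℝ) (C : ℕ → LaurentSeries ℝ) (k : ℕ) (hk : k ≠ 0) :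
    (if k = 0 then 0 else
      ∑ p ∈ Finset.range k, ∑ q ∈ Finset.range k,
        HahnSeries.ofPowerSeries ℤ ℝ (PowerSeries.mk fun s => β s p q) *
          PowerSeries.coeff (R := LaurentSeries ℝ) (k - 1 - p) ((PowerSeries.mk C) ^ q)) =
      RHS β C k := by
  rw [if_neg hk]; rfl

end MajorantAux

namespace MajorantAux

lemma Csol_solves {σ : ℝ} (hσ : 0 < σ) (r : ℕ) {h : ℕ → ℝ} (hh : ∀ s, 0 ≤ h s)
    (β : ℕ → ℕ → ℕ → ℝ) : SolvesMajorantEquation σ r h β (Csol σ r h β) := by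
  refine ⟨Csol_zero σ r h β, fun k => ?_⟩
  cases k with
  | zero => rw [Csol_zero]; simp
  | succ k =>
    rw [ifsum_eq β _ (k + 1) (Nat.succ_ne_zero k), ← sub_eq_iff_eq_add', D_mul_eq',
      Csol_succ, ← mul_assoc, mul_inv_cancel₀ (D_ne_zero hσ r hh), one_mul]

lemma Csol_unique {σ : ℝ} (hσ : 0 < σ) (r : ℕ) {h : ℕ → ℝ} (hh : ∀ s, 0 ≤ h s)
    (β : ℕ → ℕ → ℕ → ℝ) (C : ℕ → LaurentSeries ℝ)
    (hC : SolvesMajorantEquation σ r h β C) : C = Csol σ r h β := by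
  funext k
  induction k using Nat.strong_induction_on with
  | _ k ih =>
    cases k with
    | zero => rw [hC.1, Csol_zero]
    | succ k =>
      have heq := hC.2 (k + 1)
      rw [ifsum_eq β C (k + 1) (Nat.succ_ne_zero k), ← sub_eq_iff_eq_add', D_mul_eq'] at heq
      have h2 : RHS β C (k + 1) = RHS β (Csol σ r h β) (k + 1) :=
        RHS_congr β fun j hj => ih j hj
      apply mul_left_cancel₀ (D_ne_zero hσ r hh)
      rw [heq, h2, Csol_succ, ← mul_assoc, mul_inv_cancel₀ (D_ne_zero hσ r hh), one_mul]

lemma sol_nonneg {σ : ℝ} (hσ : 0 < σ) (r : ℕ) {h : ℕ → ℝ} (hh : ∀ s, 0 ≤ h s)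
    {β : ℕ → ℕ → ℕ → ℝ} (hβ : ∀ s p q, 0 ≤ β s p q) (C : ℕ → LaurentSeries ℝ)
    (hC : SolvesMajorantEquation σ r h β C) :
    ∀ k : ℕ, NN (-((k : ℤ) * r)) (C k) := by
  intro k
  induction k using Nat.strong_induction_on with
  | _ k ih =>
    cases k with
    | zero => rw [hC.1]; exact NN.zero _
    | succ k =>
      have hE : NN (-((k : ℤ) * r)) (RHS β C (k + 1)) := by
        apply NN.sum
        intro p hp
        apply NN.sum
        intro q hq
        rw [Finset.mem_range] at hp hq
        have h1 : NN 0 (Bc β p q) := NN.ofPS (by simpa using fun s => hβ s p q)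
        have h2 := pow_coeff_NN C r (k + 1 - 1 - p)
          (fun j hj => ih j (by omega)) q (k + 1 - 1 - p) le_rfl
        have h3 := NN.mul h1 h2
        rw [zero_add] at h3
        refine NN.mono ?_ h3
        have hle : ((k + 1 - 1 - p : ℕ) : ℤ) ≤ (k : ℤ) := by omega
        exact neg_le_neg (mul_le_mul_of_nonneg_right hle r.cast_nonneg)
      have heq := hC.2 (k + 1)
      rw [ifsum_eq β C (k + 1) (Nat.succ_ne_zero k), tpow r, tpow (r + 1)] at heq
      push_cast at heq
      have hA : NN ((r : ℤ) + 1)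
          (HahnSeries.single ((r : ℤ) + 1) (1 : ℝ) *
            HahnSeries.ofPowerSeries ℤ ℝ (PowerSeries.mk h)) := by
        have := NN.mul (NN.single (n := (r : ℤ) + 1) (c := (1 : ℝ)) zero_le_one) (NN_Hhat hh)
        rwa [add_zero] at this
      have hkey := key hσ r _ _ _ hA _ hE heq
      have hcast : -((k : ℤ) * r) - r = -(((k + 1 : ℕ) : ℤ) * r) := by push_cast; ring
      rwa [hcast] at hkey

end MajorantAux

/-- Existence, uniqueness and nonnegativity for the majorant equation
`σ t^r V = t^{r+1} ĥ(t) V + x M̃(t, x, V)`: if `σ > 0`, all `h_s ≥ 0` and all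
`β_{spq} ≥ 0`, then there is a unique sequence `(C_k)_{k ≥ 1}` of formal Laurent
series in `t` over `ℝ` solving the equation; moreover each `C_k` has order at least
`-kr` and all of its coefficients are nonnegative. -/
theorem majorant_equation_existence_uniqueness_nonnegativity
    (σ : ℝ) (hσ : 0 < σ) (r : ℕ) (h : ℕ → ℝ) (hh : ∀ s : ℕ, 0 ≤ h s)
    (β : ℕ → ℕ → ℕ → ℝ) (hβ : ∀ s p q : ℕ, 0 ≤ β s p q) :
    (∃! C : ℕ → LaurentSeries ℝ, SolvesMajorantEquation σ r h β C) ∧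
    (∀ C : ℕ → LaurentSeries ℝ, SolvesMajorantEquation σ r h β C →
      ∀ k : ℕ, 1 ≤ k →
        (∀ ℓ : ℤ, ℓ < -(k * r : ℤ) → (C k).coeff ℓ = 0) ∧
        (∀ ℓ : ℤ, 0 ≤ (C k).coeff ℓ)) := by
  constructor
  · exact ⟨MajorantAux.Csol σ r h β, MajorantAux.Csol_solves hσ r hh β,
      fun C hC => MajorantAux.Csol_unique hσ r hh β C hC⟩
  · intro C hC k _
    have hNN := MajorantAux.sol_nonneg hσ r hh hβ C hC k
    exact ⟨fun ℓ hℓ => hNN.2 ℓ (by omega), hNN.1⟩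
end
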